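/- Every element of the monoid of 2×2 integer matrices (up to positive scalar) generated by A = [[1,0],[1,1]], B = [[0,1],[-1,2]], C = [[2,0],[1,1]], and c = [[1,0],[-1,2]] whose associated linear fractional transformation maps [0,1) bijectively onto [0,1) is equal (up to positive scalar) to C^k for some integer k. -/

import Mathlib

def MA : Matrix (Fin 2) (Fin 2) ℤ := !![1, 0; 1, 1]
def MB : Matrix (Fin 2) (Fin 2) ℤ := !![0, 1; -1, 2]
def MC : Matrix (Fin 2) (Fin 2) ℤ := !![2, 0; 1, 1]
def Mc : Matrix (Fin 2) (Fin 2) ℤ := !![1, 0; -1, 2]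

/-- The linear fractional transformation of ℝ associated to an integer matrix. -/
noncomputable def lft (M : Matrix (Fin 2) (Fin 2) ℤ) (x : ℝ) : ℝ :=
  ((M 0 0 : ℝ) * x + (M 0 1 : ℝ)) / ((M 1 0 : ℝ) * x + (M 1 1 : ℝ))

open Set

namespace Stmt7Aux

lemma mul_e (M N : Matrix (Fin 2) (Fin 2) ℤ) (i j : Fin 2) :
    (M * N) i j = M i 0 * N 0 j + M i 1 * N 1 j := by
  simp [Matrix.mul_apply, Fin.sum_univ_two]

lemma den_mul (M N : Matrix (Fin 2) (Fin 2) ℤ) (x : ℝ)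
    (hd : ((N 1 0 : ℝ) * x + N 1 1) ≠ 0) :
    (((M * N) 1 0 : ℝ) * x + (M * N) 1 1)
      = ((N 1 0 : ℝ) * x + N 1 1) * ((M 1 0 : ℝ) * lft N x + M 1 1) := by
  unfold lft
  field_simp
  push_cast [mul_e]
  field_simp
  ring

lemma lft_mul (M N : Matrix (Fin 2) (Fin 2) ℤ) (x : ℝ)
    (hd : ((N 1 0 : ℝ) * x + N 1 1) ≠ 0) :
    lft (M * N) x = lft M (lft N x) := by
  have key : ∀ i : Fin 2,
      ((M i 0 : ℝ) * lft N x + M i 1)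
        = ((M i 0 : ℝ) * ((N 0 0 : ℝ) * x + N 0 1) + (M i 1 : ℝ) * ((N 1 0 : ℝ) * x + N 1 1))
            / ((N 1 0 : ℝ) * x + N 1 1) := by
    intro i
    unfold lft
    field_simp
    rw [div_add' _ _ _ (by rwa [mul_comm x])]
    ring
  unfold lft
  rw [show ((M 0 0 : ℝ)) = (M 0 0 : ℝ) from rfl]
  have h0 := key 0
  have h1 := key 1
  unfold lft at h0 h1
  rw [h0, h1, div_div_div_cancel_right₀]
  · congr 1 <;> push_cast [mul_e] <;> ring
  · exact hd

lemma inj_of_det (M : Matrix (Fin 2) (Fin 2) ℤ) (hdet : M.det ≠ 0)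
    (hden : ∀ x ∈ Ico (0:ℝ) 1, ((M 1 0 : ℝ) * x + M 1 1) ≠ 0) :
    InjOn (lft M) (Ico 0 1) := by
  intro a ha b hb h
  unfold lft at h
  rw [div_eq_div_iff (hden a ha) (hden b hb)] at h
  have hd : ((M.det : ℤ) : ℝ) ≠ 0 := by exact_mod_cast hdet
  rw [Matrix.det_fin_two] at hd
  push_cast at hd
  have : ((M 0 0 : ℝ) * M 1 1 - M 0 1 * M 1 0) * (a - b) = 0 := by linear_combination h
  rcases mul_eq_zero.1 this with h' | h'
  · exact absurd h' hd
  · linarith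

def Good (M : Matrix (Fin 2) (Fin 2) ℤ) : Prop :=
  (∀ x ∈ Ico (0:ℝ) 1, 0 < (M 1 0 : ℝ) * x + M 1 1) ∧
  MapsTo (lft M) (Ico 0 1) (Ico 0 1) ∧
  InjOn (lft M) (Ico 0 1) ∧
  ((∃ k : ℕ, ∃ s t : ℤ, 0 < s ∧ 0 < t ∧ (s • M = t • MC ^ k ∨ s • M = t • Mc ^ k)) ∨
   ¬ SurjOn (lft M) (Ico 0 1) (Ico 0 1))

lemma Cc : MC * Mc = (2:ℤ) • 1 := by
  ext i j; fin_cases i <;> fin_cases j <;>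
    simp [MC, Mc, Matrix.mul_apply, Fin.sum_univ_two, Matrix.one_apply]

lemma cC : Mc * MC = (2:ℤ) • 1 := by
  ext i j; fin_cases i <;> fin_cases j <;>
    simp [MC, Mc, Matrix.mul_apply, Fin.sum_univ_two, Matrix.one_apply]

lemma Cn_cn (n : ℕ) : MC ^ n * Mc ^ n = ((2:ℤ) ^ n) • 1 := by
  induction n with
  | zero => simp
  | succ n ih =>
    rw [pow_succ MC, pow_succ' Mc, mul_assoc, ← mul_assoc MC, Cc, smul_mul_assoc,
      one_mul, mul_smul_comm, ih, smul_smul, pow_succ']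

lemma cn_Cn (n : ℕ) : Mc ^ n * MC ^ n = ((2:ℤ) ^ n) • 1 := by
  induction n with
  | zero => simp
  | succ n ih =>
    rw [pow_succ Mc, pow_succ' MC, mul_assoc, ← mul_assoc Mc, cC, smul_mul_assoc,
      one_mul, mul_smul_comm, ih, smul_smul, pow_succ']

lemma combineCc (a b : ℕ) :
    ∃ (k : ℕ) (u : ℤ), 0 < u ∧
      (MC ^ a * Mc ^ b = u • MC ^ k ∨ MC ^ a * Mc ^ b = u • Mc ^ k) := by
  rcases le_total a b with h | h
  · obtain ⟨d, rfl⟩ := le_iff_exists_add.1 h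
    refine ⟨d, 2 ^ a, by positivity, Or.inr ?_⟩
    rw [pow_add, ← mul_assoc, Cn_cn, smul_mul_assoc, one_mul]
  · obtain ⟨e, rfl⟩ := le_iff_exists_add.1 h
    refine ⟨e, 2 ^ b, by positivity, Or.inl ?_⟩
    rw [add_comm, pow_add, mul_assoc, Cn_cn, mul_smul_comm, mul_one]

lemma combinecC (a b : ℕ) :
    ∃ (k : ℕ) (u : ℤ), 0 < u ∧
      (Mc ^ a * MC ^ b = u • MC ^ k ∨ Mc ^ a * MC ^ b = u • Mc ^ k) := by
  rcases le_total a b with h | h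
  · obtain ⟨d, rfl⟩ := le_iff_exists_add.1 h
    refine ⟨d, 2 ^ a, by positivity, Or.inl ?_⟩
    rw [pow_add, ← mul_assoc, cn_Cn, smul_mul_assoc, one_mul]
  · obtain ⟨e, rfl⟩ := le_iff_exists_add.1 h
    refine ⟨e, 2 ^ b, by positivity, Or.inr ?_⟩
    rw [add_comm, pow_add, mul_assoc, cn_Cn, mul_smul_comm, mul_one]

lemma good_mul {M N : Matrix (Fin 2) (Fin 2) ℤ} (hM : Good M) (hN : Good N) :
    Good (M * N) := by
  obtain ⟨hMd, hMm, hMi, hMs⟩ := hM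
  obtain ⟨hNd, hNm, hNi, hNs⟩ := hN
  have hden : ∀ x ∈ Ico (0:ℝ) 1, 0 < ((M * N) 1 0 : ℝ) * x + (M * N) 1 1 := by
    intro x hx
    rw [den_mul M N x (ne_of_gt (hNd x hx))]
    exact mul_pos (hNd x hx) (hMd _ (hNm hx))
  have hmaps : MapsTo (lft (M * N)) (Ico 0 1) (Ico 0 1) := by
    intro x hx
    rw [lft_mul M N x (ne_of_gt (hNd x hx))]
    exact hMm (hNm hx)
  have hinj : InjOn (lft (M * N)) (Ico 0 1) := by
    intro a ha b hb h
    rw [lft_mul M N a (ne_of_gt (hNd a ha)), lft_mul M N b (ne_of_gt (hNd b hb))] at h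
    exact hNi ha hb (hMi (hNm ha) (hNm hb) h)
  refine ⟨hden, hmaps, hinj, ?_⟩
  rcases hMs with hMl | hMns
  · rcases hNs with hNl | hNns
    · left
      obtain ⟨a, s1, t1, hs1, ht1, h1⟩ := hMl
      obtain ⟨b, s2, t2, hs2, ht2, h2⟩ := hNl
      have hss : (0:ℤ) < s1 * s2 := mul_pos hs1 hs2
      rcases h1 with h1 | h1 <;> rcases h2 with h2 | h2
      · refine ⟨a + b, s1 * s2, t1 * t2, hss, mul_pos ht1 ht2, Or.inl ?_⟩
        rw [← smul_mul_smul_comm, h1, h2, smul_mul_smul_comm, ← pow_add]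
      · obtain ⟨k, u, hu, hZ⟩ := combineCc a b
        refine ⟨k, s1 * s2, t1 * t2 * u, hss, mul_pos (mul_pos ht1 ht2) hu, ?_⟩
        rcases hZ with hZ | hZ
        · exact Or.inl (by
            rw [← smul_mul_smul_comm, h1, h2, smul_mul_smul_comm, hZ, smul_smul])
        · exact Or.inr (by
            rw [← smul_mul_smul_comm, h1, h2, smul_mul_smul_comm, hZ, smul_smul])
      · obtain ⟨k, u, hu, hZ⟩ := combinecC a b
        refine ⟨k, s1 * s2, t1 * t2 * u, hss, mul_pos (mul_pos ht1 ht2) hu, ?_⟩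
        rcases hZ with hZ | hZ
        · exact Or.inl (by
            rw [← smul_mul_smul_comm, h1, h2, smul_mul_smul_comm, hZ, smul_smul])
        · exact Or.inr (by
            rw [← smul_mul_smul_comm, h1, h2, smul_mul_smul_comm, hZ, smul_smul])
      · refine ⟨a + b, s1 * s2, t1 * t2, hss, mul_pos ht1 ht2, Or.inr ?_⟩
        rw [← smul_mul_smul_comm, h1, h2, smul_mul_smul_comm, ← pow_add]
    · right
      rw [SurjOn, not_subset] at hNns
      obtain ⟨y, hy, hyn⟩ := hNns
      intro hs
      obtain ⟨x, hx, hxe⟩ := hs (hMm hy)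
      rw [lft_mul M N x (ne_of_gt (hNd x hx))] at hxe
      exact hyn ⟨x, hx, hMi (hNm hx) hy hxe⟩
  · right
    intro hs
    apply hMns
    intro y hy
    obtain ⟨x, hx, hxy⟩ := hs hy
    exact ⟨lft N x, hNm hx, by rw [← lft_mul M N x (ne_of_gt (hNd x hx))]; exact hxy⟩

lemma lftA (x : ℝ) : lft MA x = x / (x + 1) := by simp [lft, MA]

lemma lftB (x : ℝ) : lft MB x = 1 / (2 - x) := by
  simp only [lft, MB]
  norm_num
  ring_nf

lemma lftC (x : ℝ) : lft MC x = 2 * x / (x + 1) := by simp [lft, MC]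

lemma lftc (x : ℝ) : lft Mc x = x / (2 - x) := by
  simp only [lft, Mc]
  norm_num
  ring_nf

lemma good_one : Good 1 := by
  have h : ∀ x : ℝ, lft 1 x = x := by intro x; simp [lft, Matrix.one_apply]
  refine ⟨?_, ?_, ?_, Or.inl ⟨0, 1, 1, one_pos, one_pos, Or.inl (by simp)⟩⟩
  · intro x hx; simp [Matrix.one_apply]
  · intro x hx; rwa [h]
  · intro a ha b hb hab; rwa [h, h] at hab

lemma goodA : Good MA := by
  have hden : ∀ x ∈ Ico (0:ℝ) 1, 0 < (MA 1 0 : ℝ) * x + MA 1 1 := by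
    intro x hx
    simp only [MA]
    norm_num
    linarith [hx.1]
  refine ⟨hden, ?_, ?_, Or.inr ?_⟩
  · intro x hx
    rw [lftA]
    constructor
    · exact div_nonneg hx.1 (by linarith [hx.1])
    · rw [div_lt_one (by linarith [hx.1])]; linarith
  · refine inj_of_det MA (by decide) fun x hx => ne_of_gt (hden x hx)
  · intro hs
    obtain ⟨x, hx, he⟩ := hs (show (1/2 : ℝ) ∈ Ico 0 1 by norm_num)
    rw [lftA, div_eq_div_iff (by linarith [hx.1]) (by norm_num)] at he
    have : x = 1 := by linarith
    linarith [hx.2]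

lemma goodB : Good MB := by
  have hden : ∀ x ∈ Ico (0:ℝ) 1, 0 < (MB 1 0 : ℝ) * x + MB 1 1 := by
    intro x hx
    simp only [MB]
    norm_num
    linarith [hx.2]
  refine ⟨hden, ?_, ?_, Or.inr ?_⟩
  · intro x hx
    rw [lftB]
    have h2 : (0:ℝ) < 2 - x := by linarith [hx.2]
    constructor
    · positivity
    · rw [div_lt_one h2]; linarith [hx.2]
  · refine inj_of_det MB (by decide) fun x hx => ne_of_gt (hden x hx)
  · intro hs
    obtain ⟨x, hx, he⟩ := hs (show (0 : ℝ) ∈ Ico 0 1 by norm_num)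
    rw [lftB] at he
    have h2 : (0:ℝ) < 2 - x := by linarith [hx.2]
    have : (0:ℝ) < 1 / (2 - x) := by positivity
    linarith [this, he.le]

lemma goodC : Good MC := by
  have hden : ∀ x ∈ Ico (0:ℝ) 1, 0 < (MC 1 0 : ℝ) * x + MC 1 1 := by
    intro x hx
    simp only [MC]
    norm_num
    linarith [hx.1]
  refine ⟨hden, ?_, ?_, Or.inl ⟨1, 1, 1, one_pos, one_pos, Or.inl (by simp)⟩⟩
  · intro x hx
    rw [lftC]
    constructor
    · exact div_nonneg (by linarith [hx.1]) (by linarith [hx.1])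
    · rw [div_lt_one (by linarith [hx.1])]; linarith [hx.2]
  · refine inj_of_det MC (by decide) fun x hx => ne_of_gt (hden x hx)

lemma goodc : Good Mc := by
  have hden : ∀ x ∈ Ico (0:ℝ) 1, 0 < (Mc 1 0 : ℝ) * x + Mc 1 1 := by
    intro x hx
    simp only [Mc]
    norm_num
    linarith [hx.2]
  refine ⟨hden, ?_, ?_, Or.inl ⟨1, 1, 1, one_pos, one_pos, Or.inr (by simp)⟩⟩
  · intro x hx
    rw [lftc]
    constructor
    · exact div_nonneg hx.1 (by linarith [hx.2])
    · rw [div_lt_one (by linarith [hx.2])]; linarith [hx.2]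
  · refine inj_of_det Mc (by decide) fun x hx => ne_of_gt (hden x hx)

end Stmt7Aux

open Stmt7Aux in
/-- Every element of the monoid generated by A, B, C, c whose associated linear
    fractional transformation maps [0,1) bijectively onto [0,1) is, up to positive
    scalar, a power C^k (k ∈ ℤ, realized as C^k for k ≥ 0 or c^k for k ≤ 0). -/
theorem stmt7 :
    ∀ M ∈ Submonoid.closure ({MA, MB, MC, Mc} : Set (Matrix (Fin 2) (Fin 2) ℤ)),
      Set.BijOn (lft M) (Set.Ico 0 1) (Set.Ico 0 1) →
      ∃ k : ℕ, ∃ s t : ℤ, 0 < s ∧ 0 < t ∧ (s • M = t • MC ^ k ∨ s • M = t • Mc ^ k) := by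
  have key : ∀ M ∈ Submonoid.closure ({MA, MB, MC, Mc} : Set (Matrix (Fin 2) (Fin 2) ℤ)),
      Good M := by
    intro M hM
    induction hM using Submonoid.closure_induction with
    | mem x hx =>
      simp only [Set.mem_insert_iff, Set.mem_singleton_iff] at hx
      rcases hx with rfl | rfl | rfl | rfl
      exacts [goodA, goodB, goodC, goodc]
    | one => exact good_one
    | mul x y _ _ hx hy => exact good_mul hx hy
  intro M hM hbij
  obtain ⟨_, _, _, hs⟩ := key M hM
  rcases hs with h | h
  · exact h
  · exact absurd hbij.surjOn h
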